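/- Let 𝔥₃ be the 3-dimensional Heisenberg Lie algebra. The set sDer(𝔥₃) of derivations of 𝔥₃ whose underlying linear map has trace zero is a Lie subalgebra of the Lie algebra Der(𝔥₃) of all derivations; it contains the inner derivations ad(𝔥₃) = {ad(y) : y ∈ 𝔥₃} as a Lie ideal; and the quotient Lie algebra sDer(𝔥₃)/ad(𝔥₃) is isomorphic to sl(2,ℝ). -/

import Mathlib

set_option linter.unusedSectionVars false
namespace Stmt7Proof

variable {L : Type} [LieRing L] [LieAlgebra ℝ L]
  (b : Module.Basis (Fin 3) ℝ L)
  (h21 : ⁅b 2, b 1⁆ = b 0) (h20 : ⁅b 2, b 0⁆ = 0) (h10 : ⁅b 1, b 0⁆ = 0)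

section
include h21 h20 h10

lemma h12 : ⁅b 1, b 2⁆ = -b 0 := by rw [← lie_skew, h21]
lemma h01 : ⁅b 0, b 1⁆ = 0 := by rw [← lie_skew, h10, neg_zero]
lemma h02 : ⁅b 0, b 2⁆ = 0 := by rw [← lie_skew, h20, neg_zero]

/-- bracket with `b 2` on the left. -/
lemma lie2 (x : L) : ⁅b 2, x⁆ = b.repr x 1 • b 0 := by
  conv_lhs => rw [← b.sum_repr x]
  simp [-Module.Basis.sum_repr, Fin.sum_univ_three, lie_add, lie_smul, h21, h20, lie_self]

lemma lie1 (x : L) : ⁅b 1, x⁆ = -(b.repr x 2 • b 0) := by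
  conv_lhs => rw [← b.sum_repr x]
  simp [-Module.Basis.sum_repr, Fin.sum_univ_three, lie_add, lie_smul, h12 b h21 h20 h10, h10, lie_self]

lemma lie0 (x : L) : ⁅b 0, x⁆ = 0 := by
  conv_lhs => rw [← b.sum_repr x]
  simp [-Module.Basis.sum_repr, Fin.sum_univ_three, lie_add, lie_smul, h01 b h21 h20 h10, h02 b h21 h20 h10, lie_self]

/-- A derivation applied to the central element. -/
lemma der_b0 (D : LieDerivation ℝ L L) :
    D (b 0) = (b.repr (D (b 1)) 1 + b.repr (D (b 2)) 2) • b 0 := by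
  have : D (b 0) = ⁅b 2, D (b 1)⁆ + ⁅D (b 2), b 1⁆ := by
    rw [← h21, LieDerivation.apply_lie_eq_add]
  rw [this, lie2 b h21 h20 h10, ← lie_skew, lie1 b h21 h20 h10]
  module

lemma trace_der (D : LieDerivation ℝ L L) :
    LinearMap.trace ℝ L D.toLinearMap
      = 2 * (b.repr (D (b 1)) 1 + b.repr (D (b 2)) 2) := by
  rw [LinearMap.trace_eq_matrix_trace ℝ b, Matrix.trace]
  simp only [Fin.sum_univ_three, Matrix.diag_apply, LinearMap.toMatrix_apply,
    LieDerivation.coeFn_coe]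
  rw [der_b0 b h21 h20 h10 D]
  simp [Module.Basis.repr_self, Finsupp.single_apply]
  ring


/-- The `2×2` block of a derivation on the span of `b 1, b 2`. -/
noncomputable def blk (D : LieDerivation ℝ L L) : Matrix (Fin 2) (Fin 2) ℝ :=
  !![b.repr (D (b 1)) 1, b.repr (D (b 2)) 1; b.repr (D (b 1)) 2, b.repr (D (b 2)) 2]

lemma apply_of_b0_zero (D : LieDerivation ℝ L L) (hD0 : D (b 0) = 0) (x : L) :
    D x = b.repr x 1 • D (b 1) + b.repr x 2 • D (b 2) := by
  conv_lhs => rw [← b.sum_repr x]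
  simp [-Module.Basis.sum_repr, Fin.sum_univ_three, hD0]

lemma b0_zero_of_mem (D : LieDerivation ℝ L L)
    (hD : LinearMap.trace ℝ L D.toLinearMap = 0) :
    D (b 0) = 0 ∧ b.repr (D (b 1)) 1 + b.repr (D (b 2)) 2 = 0 := by
  have h2 := trace_der b h21 h20 h10 D
  rw [hD] at h2
  have hs : b.repr (D (b 1)) 1 + b.repr (D (b 2)) 2 = 0 := by linarith
  refine ⟨?_, hs⟩
  rw [der_b0 b h21 h20 h10 D, hs, zero_smul]

lemma blk_lie (D E : LieDerivation ℝ L L) (hD0 : D (b 0) = 0) (hE0 : E (b 0) = 0) :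
    blk b ⁅D, E⁆ = blk b D * blk b E - blk b E * blk b D := by
  have key : ∀ (F G : LieDerivation ℝ L L), F (b 0) = 0 → ∀ j i : Fin 3,
      b.repr (F (G (b j))) i
        = b.repr (G (b j)) 1 * b.repr (F (b 1)) i + b.repr (G (b j)) 2 * b.repr (F (b 2)) i := by
    intro F G hF0 j i
    rw [apply_of_b0_zero b h21 h20 h10 F hF0 (G (b j))]
    simp [smul_eq_mul, mul_comm]
  ext i j
  fin_cases i <;> fin_cases j <;>
    simp [blk, LieDerivation.lie_apply, map_sub, Matrix.mul_apply, Fin.sum_univ_two,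
      key D E hD0, key E D hE0] <;> ring


attribute [local instance 100] LieRing.ofAssociativeRing in
noncomputable def sDer (L : Type) [LieRing L] [LieAlgebra ℝ L] :
    LieSubalgebra ℝ (LieDerivation ℝ L L) :=
  { LinearMap.ker ((LinearMap.trace ℝ L) ∘ₗ (LieDerivation.toLinearMapLieHom ℝ L).toLinearMap) with
    lie_mem' := by
      intro D E _ _
      show LinearMap.trace ℝ L (⁅D, E⁆ : LieDerivation ℝ L L).toLinearMap = 0
      rw [show (⁅D, E⁆ : LieDerivation ℝ L L).toLinearMap
            = ⁅(D : Module.End ℝ L), (E : Module.End ℝ L)⁆ from rfl,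
        Ring.lie_def, map_sub, LinearMap.trace_mul_comm, sub_self] }

lemma mem_sDer (D : LieDerivation ℝ L L) :
    D ∈ sDer L ↔ LinearMap.trace ℝ L D.toLinearMap = 0 := Iff.rfl

lemma blk_trace (D : (sDer L)) : Matrix.trace (blk b D.1) = 0 := by
  have h := (b0_zero_of_mem b h21 h20 h10 D.1 D.2).2
  simp [blk, Matrix.trace, Fin.sum_univ_two]
  convert h using 2

lemma blk_add (D E : LieDerivation ℝ L L) : blk b (D + E) = blk b D + blk b E := by
  ext i j
  fin_cases i <;> fin_cases j <;> simp [blk]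

lemma blk_smul (c : ℝ) (D : LieDerivation ℝ L L) : blk b (c • D) = c • blk b D := by
  ext i j
  fin_cases i <;> fin_cases j <;> simp [blk]

open LieAlgebra.SpecialLinear in
noncomputable def phi : (sDer L) →ₗ⁅ℝ⁆ sl (Fin 2) ℝ where
  toFun D := ⟨blk b D.1, blk_trace b h21 h20 h10 D⟩
  map_add' D E := Subtype.ext (blk_add b h21 h20 h10 D.1 E.1)
  map_smul' c D := Subtype.ext (blk_smul b h21 h20 h10 c D.1)
  map_lie' {D E} := Subtype.ext (by
    show blk b (⁅D.1, E.1⁆ : LieDerivation ℝ L L)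
        = blk b D.1 * blk b E.1 - blk b E.1 * blk b D.1
    exact blk_lie b h21 h20 h10 D.1 E.1 (b0_zero_of_mem b h21 h20 h10 D.1 D.2).1
      (b0_zero_of_mem b h21 h20 h10 E.1 E.2).1)

lemma phi_ker_iff (D : (sDer L)) :
    phi b h21 h20 h10 D = 0 ↔ ∃ y : L, ∀ x : L, (D : LieDerivation ℝ L L) x = ⁅y, x⁆ := by
  have hD0 := (b0_zero_of_mem b h21 h20 h10 D.1 D.2).1
  constructor
  · intro h
    have hM : blk b D.1 = 0 := congrArg Subtype.val h
    have e11 : b.repr (D.1 (b 1)) 1 = 0 := by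
      have := congrFun (congrFun hM 0) 0; simpa [blk] using this
    have e21 : b.repr (D.1 (b 1)) 2 = 0 := by
      have := congrFun (congrFun hM 1) 0; simpa [blk] using this
    have e12 : b.repr (D.1 (b 2)) 1 = 0 := by
      have := congrFun (congrFun hM 0) 1; simpa [blk] using this
    have e22 : b.repr (D.1 (b 2)) 2 = 0 := by
      have := congrFun (congrFun hM 1) 1; simpa [blk] using this
    have hb1 : D.1 (b 1) = b.repr (D.1 (b 1)) 0 • b 0 := by
      conv_lhs => rw [← b.sum_repr (D.1 (b 1))]
      simp [-Module.Basis.sum_repr, Fin.sum_univ_three, e11, e21]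
    have hb2 : D.1 (b 2) = b.repr (D.1 (b 2)) 0 • b 0 := by
      conv_lhs => rw [← b.sum_repr (D.1 (b 2))]
      simp [-Module.Basis.sum_repr, Fin.sum_univ_three, e12, e22]
    refine ⟨b.repr (D.1 (b 1)) 0 • b 2 - b.repr (D.1 (b 2)) 0 • b 1, fun x => ?_⟩
    rw [apply_of_b0_zero b h21 h20 h10 D.1 hD0 x, hb1, hb2,
      sub_lie, smul_lie, smul_lie, lie2 b h21 h20 h10 x, lie1 b h21 h20 h10 x]
    simp only [map_smul, Finsupp.smul_apply, Module.Basis.repr_self, Finsupp.single_eq_same,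
      smul_eq_mul]
    module
  · rintro ⟨y, hy⟩
    refine Subtype.ext ?_
    show blk b D.1 = 0
    have k1 : D.1 (b 1) = b.repr y 2 • b 0 := by
      rw [hy (b 1), ← lie_skew, lie1 b h21 h20 h10 y, neg_neg]
    have k2 : D.1 (b 2) = -(b.repr y 1 • b 0) := by
      rw [hy (b 2), ← lie_skew, lie2 b h21 h20 h10 y]
    ext i j
    fin_cases i <;> fin_cases j <;>
      simp [blk, k1, k2, Module.Basis.repr_self, Finsupp.single_apply]


noncomputable def fOf (M : Matrix (Fin 2) (Fin 2) ℝ) : L →ₗ[ℝ] L :=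
  b.constr ℝ ![0, M 0 0 • b 1 + M 1 0 • b 2, M 0 1 • b 1 + M 1 1 • b 2]

lemma fOf_apply0 (M : Matrix (Fin 2) (Fin 2) ℝ) : fOf b M (b 0) = 0 := by
  simp [fOf, Module.Basis.constr_basis]

lemma fOf_apply1 (M : Matrix (Fin 2) (Fin 2) ℝ) :
    fOf b M (b 1) = M 0 0 • b 1 + M 1 0 • b 2 := by
  have := b.constr_basis ℝ ![0, M 0 0 • b 1 + M 1 0 • b 2, M 0 1 • b 1 + M 1 1 • b 2] 1
  simpa [fOf] using this

lemma fOf_apply2 (M : Matrix (Fin 2) (Fin 2) ℝ) :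
    fOf b M (b 2) = M 0 1 • b 1 + M 1 1 • b 2 := by
  have := b.constr_basis ℝ ![0, M 0 0 • b 1 + M 1 0 • b 2, M 0 1 • b 1 + M 1 1 • b 2] 2
  simpa [fOf] using this

noncomputable def DOf (M : Matrix (Fin 2) (Fin 2) ℝ) (htr : M 0 0 + M 1 1 = 0) :
    LieDerivation ℝ L L where
  toLinearMap := fOf b M
  leibniz' := by
    have key : ∀ i j : Fin 3,
        fOf b M ⁅b i, b j⁆ = ⁅b i, fOf b M (b j)⁆ - ⁅b j, fOf b M (b i)⁆ := by
      have hM : M 1 1 = -(M 0 0) := by linarith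
      intro i j
      fin_cases i <;> fin_cases j <;>
        simp [fOf_apply0 b h21 h20 h10 M, fOf_apply1 b h21 h20 h10 M, fOf_apply2 b h21 h20 h10 M, h21, h20, h10,
          h12 b h21 h20 h10, h01 b h21 h20 h10, h02 b h21 h20 h10, lie_self,
          lie_add, add_lie, lie_smul, smul_lie, hM] <;>
        module
    intro x y
    let B1 : L →ₗ[ℝ] L →ₗ[ℝ] L := LinearMap.mk₂ ℝ (fun x y => fOf b M ⁅x, y⁆)
      (fun x x' y => by simp only [add_lie, map_add])
      (fun c x y => by simp only [smul_lie, map_smul])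
      (fun x y y' => by simp only [lie_add, map_add])
      (fun c x y => by simp only [lie_smul, map_smul])
    let B2 : L →ₗ[ℝ] L →ₗ[ℝ] L := LinearMap.mk₂ ℝ
      (fun x y => ⁅x, fOf b M y⁆ - ⁅y, fOf b M x⁆)
      (fun x x' y => by simp only [add_lie, lie_add, map_add]; abel)
      (fun c x y => by simp only [smul_lie, lie_smul, map_smul, smul_sub])
      (fun x y y' => by simp only [add_lie, lie_add, map_add]; abel)
      (fun c x y => by simp only [smul_lie, lie_smul, map_smul, smul_sub])
    have hB : B1 = B2 := LinearMap.ext_basis b b (fun i j => key i j)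
    have := LinearMap.congr_fun (LinearMap.congr_fun hB x) y
    simpa [B1, B2] using this

lemma DOf_mem (M : Matrix (Fin 2) (Fin 2) ℝ) (htr : M 0 0 + M 1 1 = 0) :
    DOf b h21 h20 h10 M htr ∈ sDer L := by
  rw [mem_sDer b h21 h20 h10, trace_der b h21 h20 h10]
  have k1 : (DOf b h21 h20 h10 M htr) (b 1) = M 0 0 • b 1 + M 1 0 • b 2 := fOf_apply1 b h21 h20 h10 M
  have k2 : (DOf b h21 h20 h10 M htr) (b 2) = M 0 1 • b 1 + M 1 1 • b 2 := fOf_apply2 b h21 h20 h10 M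
  rw [k1, k2]
  simp [Module.Basis.repr_self, Finsupp.single_apply]
  linarith

open LieAlgebra.SpecialLinear in
lemma phi_surjective : Function.Surjective (phi b h21 h20 h10) := by
  rintro ⟨M, hM⟩
  have htr : M 0 0 + M 1 1 = 0 := by
    have : Matrix.trace M = 0 := hM
    simpa [Matrix.trace, Fin.sum_univ_two] using this
  refine ⟨⟨DOf b h21 h20 h10 M htr, DOf_mem b h21 h20 h10 M htr⟩, ?_⟩
  refine Subtype.ext ?_
  show blk b (DOf b h21 h20 h10 M htr) = M
  have k1 : (DOf b h21 h20 h10 M htr) (b 1) = M 0 0 • b 1 + M 1 0 • b 2 := fOf_apply1 b h21 h20 h10 M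
  have k2 : (DOf b h21 h20 h10 M htr) (b 2) = M 0 1 • b 1 + M 1 1 • b 2 := fOf_apply2 b h21 h20 h10 M
  ext i j
  fin_cases i <;> fin_cases j <;>
    simp [blk, k1, k2, Module.Basis.repr_self, Finsupp.single_apply]

end

end Stmt7Proof




/-- Let `𝔥₃` be the 3-dimensional Heisenberg Lie algebra (a real Lie
algebra with basis `x₁, x₂, x₃ = b 0, b 1, b 2` whose only nonzero bracket among basis
vectors is `⁅x₃, x₂⁆ = x₁`).  The set `sDer(𝔥₃)` of derivations with traceless
underlying linear map is a Lie subalgebra of the Lie algebra `Der(𝔥₃)` of all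
derivations; it contains the inner derivations `ad(𝔥₃)` as a Lie ideal; and the
quotient Lie algebra `sDer(𝔥₃)/ad(𝔥₃)` is isomorphic to `sl(2,ℝ)`. -/
theorem stmt7
    (L : Type) [LieRing L] [LieAlgebra ℝ L]
    (b : Module.Basis (Fin 3) ℝ L)
    (h21 : ⁅b 2, b 1⁆ = b 0) (h20 : ⁅b 2, b 0⁆ = 0) (h10 : ⁅b 1, b 0⁆ = 0) :
    ∃ S : LieSubalgebra ℝ (LieDerivation ℝ L L),
      (∀ D : LieDerivation ℝ L L,
        D ∈ S ↔ LinearMap.trace ℝ L D.toLinearMap = 0) ∧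
      ∃ I : LieIdeal ℝ S,
        (∀ D : S, D ∈ I ↔ ∃ y : L, ∀ x : L, (D : LieDerivation ℝ L L) x = ⁅y, x⁆) ∧
        Nonempty ((S ⧸ I) ≃ₗ⁅ℝ⁆ LieAlgebra.SpecialLinear.sl (Fin 2) ℝ) := by
  refine ⟨Stmt7Proof.sDer L, fun D => Iff.rfl,
    (Stmt7Proof.phi b h21 h20 h10).ker, fun D => ?_, ?_⟩
  · rw [LieHom.mem_ker]
    exact Stmt7Proof.phi_ker_iff b h21 h20 h10 D
  · refine ⟨(Stmt7Proof.phi b h21 h20 h10).quotKerEquivRange.trans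
      ((LieEquiv.ofEq _ _ ?_).trans LieSubalgebra.topEquiv)⟩
    rw [(LieHom.range_eq_top _).mpr (Stmt7Proof.phi_surjective b h21 h20 h10)]
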